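/- For A, B, C, D ∈ SL₂(K) with ABCD = I, setting x₁ = Tr(BC), x₂ = Tr(AC), x₃ = Tr(AB), G₁ = Tr(A), G₂ = Tr(B), G₃ = Tr(C), G₄ = Tr(D), the Fricke relation holds: x₁x₂x₃ + x₁² + x₂² + x₃² − (G₄G₁+G₂G₃)x₁ − (G₄G₂+G₁G₃)x₂ − (G₄G₃+G₂G₁)x₃ + G₁² + G₂² + G₃² + G₄² + G₁G₂G₃G₄ = 4. -/
import Mathlib

open Matrix

/-- Fricke relation for four `SL₂` matrices with product the identity. -/
theorem fricke_relation {K : Type*} [Field K]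
    (A B C D : Matrix (Fin 2) (Fin 2) K)
    (hA : A.det = 1) (hB : B.det = 1) (hC : C.det = 1) (hD : D.det = 1)
    (hprod : A * B * C * D = 1)
    (x₁ x₂ x₃ G₁ G₂ G₃ G₄ : K)
    (hx₁ : x₁ = (B * C).trace) (hx₂ : x₂ = (A * C).trace) (hx₃ : x₃ = (A * B).trace)
    (hG₁ : G₁ = A.trace) (hG₂ : G₂ = B.trace) (hG₃ : G₃ = C.trace) (hG₄ : G₄ = D.trace) :
    x₁ * x₂ * x₃ + x₁^2 + x₂^2 + x₃^2
      - (G₄ * G₁ + G₂ * G₃) * x₁ - (G₄ * G₂ + G₁ * G₃) * x₂ - (G₄ * G₃ + G₂ * G₁) * x₃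
      + G₁^2 + G₂^2 + G₃^2 + G₄^2 + G₁ * G₂ * G₃ * G₄ = 4 := by
  have hdet : (A * B * C).det = 1 := by
    rw [Matrix.det_mul, Matrix.det_mul, hA, hB, hC]; ring
  have hDeq : D = (A * B * C).adjugate := by
    have h1 : (A * B * C) * D = 1 := hprod
    have h2 := Matrix.inv_eq_right_inv h1
    rw [← h2, Matrix.inv_def, hdet, Matrix.adjugate_fin_two]
    simp
  have hG₄' : G₄ = (A * B * C) 0 0 + (A * B * C) 1 1 := by
    rw [hG₄, hDeq, Matrix.adjugate_fin_two, Matrix.trace_fin_two]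
    simp [add_comm]
  rw [Matrix.det_fin_two] at hA hB hC
  subst hx₁ hx₂ hx₃ hG₁ hG₂ hG₃
  simp only [Matrix.trace_fin_two, Matrix.mul_apply, Fin.sum_univ_two] at hG₄' ⊢
  rw [hG₄']
  linear_combination ((2) + (-1) * C 1 1^2 + (-1) * C 0 0^2 + (-1) * B 1 1^2 + (1) * B 1 1^2 * C 0 0 * C 1 1 + (-1) * B 1 0 * B 1 1 * C 0 1 * C 1 1 + (1) * B 1 0 * B 1 1 * C 0 0 * C 0 1 + (-1) * B 1 0^2 * C 0 1^2 + (-1) * B 0 1 * B 1 1 * C 1 0 * C 1 1 + (1) * B 0 1 * B 1 1 * C 0 0 * C 1 0 + (-1) * B 0 1^2 * C 1 0^2 + (1) * B 0 0 * B 1 1 * C 1 1^2 + (-2) * B 0 0 * B 1 1 * C 0 0 * C 1 1 + (1) * B 0 0 * B 1 1 * C 0 0^2 + (1) * B 0 0 * B 1 0 * C 0 1 * C 1 1 + (-1) * B 0 0 * B 1 0 * C 0 0 * C 0 1 + (1) * B 0 0 * B 0 1 * C 1 0 * C 1 1 + (-1) * B 0 0 * B 0 1 * C 0 0 * C 1 0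 + (-1) * B 0 0^2 + (1) * B 0 0^2 * C 0 0 * C 1 1) * hA + ((2) + (-2) * C 0 0 * C 1 1 + (-1) * A 1 1^2 + (1) * A 1 1^2 * C 0 0 * C 1 1 + (-1) * A 1 0 * A 1 1 * C 0 1 * C 1 1 + (1) * A 1 0 * A 1 1 * C 0 0 * C 0 1 + (-1) * A 1 0^2 * C 0 1^2 + (-1) * A 0 1 * A 1 1 * C 1 0 * C 1 1 + (1) * A 0 1 * A 1 1 * C 0 0 * C 1 0 + (1) * A 0 1 * A 1 0 * C 1 1^2 + (-2) * A 0 1 * A 1 0 * C 0 0 * C 1 1 + (1) * A 0 1 * A 1 0 * C 0 0^2 + (-1) * A 0 1^2 * C 1 0^2 + (1) * A 0 0 * A 1 0 * C 0 1 * C 1 1 + (-1) * A 0 0 * A 1 0 * C 0 0 * C 0 1 + (1) * A 0 0 * A 0 1 * C 1 0 * C 1 1 + (-1) * A 0 0 * A 0 1 * C 0 0 * C 1 0 + (-1) * A 0 0^2 + (1) * A 0 0^2 * C 0 0 * C 1 1) * hB + ((-2) * B 0 1 * B 1 0 + (1) * A 1 1^2 * B 0 1 * B 1 0 + (-1) *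 A 1 0 * A 1 1 * B 0 1 * B 1 1 + (1) * A 1 0 * A 1 1 * B 0 0 * B 0 1 + (-1) * A 1 0^2 * B 0 1^2 + (-1) * A 0 1 * A 1 1 * B 1 0 * B 1 1 + (1) * A 0 1 * A 1 1 * B 0 0 * B 1 0 + (-2) * A 0 1 * A 1 0 + (1) * A 0 1 * A 1 0 * B 1 1^2 + (-2) * A 0 1 * A 1 0 * B 0 1 * B 1 0 + (1) * A 0 1 * A 1 0 * B 0 0^2 + (-1) * A 0 1^2 * B 1 0^2 + (1) * A 0 0 * A 1 0 * B 0 1 * B 1 1 + (-1) * A 0 0 * A 1 0 * B 0 0 * B 0 1 + (1) * A 0 0 * A 0 1 * B 1 0 * B 1 1 + (-1) * A 0 0 * A 0 1 * B 0 0 * B 1 0 + (1) * A 0 0^2 * B 0 1 * B 1 0) * hC
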